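/- Let n ≥ 1, let μ ∈ ℤ^n be a dominant coweight, and let J ⊆ I ⊆ ℤ be nonempty periodic subsets. Then the restriction map sending a face (v_i)_{i∈I} of type I to the face (v_j)_{j∈J} of type J maps the set Perm_I(μ) of μ-permissible faces of type I surjectively onto the set Perm_J(μ) of μ-permissible faces of type J; that is, every μ-permissible face of type J extends to a μ-permissible face of type I. -/

import Mathlib

/-- The vector `ω_i ∈ ℤ^n`, for `i ∈ ℤ`: for `0 ≤ i ≤ n` it is `(1,…,1,0,…,0)` with `i`
ones, and `ω_{i+n} = ω_i + (1,…,1)`. -/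
def omegaVec (n : ℕ) (i : ℤ) : Fin n → ℤ := fun t => (i - ((t : ℤ) + 1)).fdiv n + 1

/-- `P_μ`: the convex hull in `ℝ^n` of the orbit of `μ` under the symmetric group
permuting the coordinates. -/
def Pmu (n : ℕ) (μ : Fin n → ℤ) : Set (Fin n → ℝ) :=
  convexHull ℝ {x : Fin n → ℝ | ∃ σ : Equiv.Perm (Fin n), x = fun t => (μ (σ t) : ℝ)}

/-- `v ∈ P_μ` for an integral vector `v`. -/
def inPmu (n : ℕ) (μ : Fin n → ℤ) (v : Fin n → ℤ) : Prop :=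
  (fun t => (v t : ℝ)) ∈ Pmu n μ

/-- A subset `I ⊆ ℤ` is periodic if `i ∈ I ↔ i + n ∈ I`. -/
def IsPeriodic (n : ℕ) (I : Set ℤ) : Prop := ∀ i : ℤ, i ∈ I ↔ i + n ∈ I

/-- A family `(v_i)_{i ∈ I}` (given as a total function, with conditions only on `I`) is a
face of type `I`: `v_{i+n} = v_i + (1,…,1)`, `v_i ≤ v_j` componentwise for `i ≤ j` in `I`,
and `Σ(v_j) - Σ(v_i) = j - i` for `i, j ∈ I`. -/
def IsFace (n : ℕ) (I : Set ℤ) (v : ℤ → Fin n → ℤ) : Prop :=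
  (∀ i ∈ I, ∀ t, v (i + n) t = v i t + 1) ∧
  (∀ i ∈ I, ∀ j ∈ I, i ≤ j → ∀ t, v i t ≤ v j t) ∧
  (∀ i ∈ I, ∀ j ∈ I, (∑ t, v j t) - (∑ t, v i t) = j - i)


open Finset

namespace PRS
variable {n : ℕ}

def mue (μ : Fin n → ℤ) (j : ℕ) : ℤ := if h : j < n then μ ⟨j, h⟩ else 0

def topSum (μ : Fin n → ℤ) (k : ℕ) : ℤ := ∑ j ∈ Finset.range k, mue μ j

def maj (μ c : Fin n → ℤ) : Prop :=
  (∑ t, c t = ∑ t, μ t) ∧ ∀ U : Finset (Fin n), ∑ t ∈ U, c t ≤ topSum μ U.card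

lemma card_le_n (U : Finset (Fin n)) : U.card ≤ n := by
  simpa using Finset.card_le_card (Finset.subset_univ U)

lemma topSum_n (μ : Fin n → ℤ) : topSum μ n = ∑ t, μ t := by
  rw [topSum, ← Fin.sum_univ_eq_sum_range]
  exact Finset.sum_congr rfl (fun t _ => by simp [mue])

lemma range_eq_image {k : ℕ} (hk : k ≤ n) :
    Finset.range k = (univ.filter (fun t : Fin n => (t : ℕ) < k)).image Fin.val := by
  ext j
  simp only [Finset.mem_range, Finset.mem_image, Finset.mem_filter, Finset.mem_univ, true_and]
  constructor
  · intro hj; exact ⟨⟨j, lt_of_lt_of_le hj hk⟩, hj, rfl⟩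
  · rintro ⟨t, ht, rfl⟩; exact ht

lemma filter_lt_card {k : ℕ} (hk : k ≤ n) :
    (univ.filter (fun t : Fin n => (t : ℕ) < k)).card = k := by
  have h := congrArg Finset.card (range_eq_image (n := n) hk)
  rw [Finset.card_range, Finset.card_image_of_injective _ Fin.val_injective] at h
  exact h.symm

lemma topSum_eq_filter (μ : Fin n → ℤ) {k : ℕ} (hk : k ≤ n) :
    topSum μ k = ∑ t ∈ univ.filter (fun t : Fin n => (t : ℕ) < k), μ t := by
  rw [topSum, range_eq_image hk,
    Finset.sum_image (by intro a _ b _ h; exact Fin.ext h)]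
  refine Finset.sum_congr rfl (fun t ht => ?_)
  simp [mue]

lemma subset_sum_le (μ : Fin n → ℤ) (hμ : ∀ i j : Fin n, i ≤ j → μ j ≤ μ i)
    (U : Finset (Fin n)) : ∑ t ∈ U, μ t ≤ topSum μ U.card := by
  generalize hm : ∑ t ∈ U, (t : ℕ) = m
  induction m using Nat.strong_induction_on generalizing U with
  | _ m ih =>
    by_cases hall : ∀ t ∈ U, (t : ℕ) < U.card
    · have hsub : U ⊆ univ.filter (fun t : Fin n => (t : ℕ) < U.card) := by
        intro t ht; simp [hall t ht]
      have : U = univ.filter (fun t : Fin n => (t : ℕ) < U.card) :=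
        Finset.eq_of_subset_of_card_le hsub (le_of_eq (filter_lt_card (card_le_n U)))
      rw [topSum_eq_filter μ (card_le_n U), ← this]
    · push_neg at hall
      obtain ⟨u, hu, huge⟩ := hall
      have : ∃ i : Fin n, (i : ℕ) < U.card ∧ i ∉ U := by
        by_contra hno
        push_neg at hno
        have hsub : univ.filter (fun t : Fin n => (t : ℕ) < U.card) ⊆ U := by
          intro t ht; simp only [mem_filter] at ht; exact hno t ht.2
        have hmem : u ∈ univ.filter (fun t : Fin n => (t : ℕ) < U.card) := by
          have := Finset.eq_of_subset_of_card_le hsub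
            (le_of_eq (filter_lt_card (card_le_n U)).symm)
          rw [this]; exact hu
        simp only [mem_filter] at hmem; omega
      obtain ⟨i, hilt, hinot⟩ := this
      have hine : i ≠ u := by rintro rfl; exact hinot hu
      have hinote : i ∉ U.erase u := fun h => hinot (Finset.mem_of_mem_erase h)
      set U' : Finset (Fin n) := insert i (U.erase u) with hU'
      have hcard' : U'.card = U.card := by
        rw [hU', Finset.card_insert_of_notMem hinote, Finset.card_erase_of_mem hu]
        have : 0 < U.card := Finset.card_pos.2 ⟨u, hu⟩
        omega
      have hsum' : ∑ t ∈ U', (t : ℕ) < m := by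
        rw [hU', Finset.sum_insert hinote, ← hm,
          ← Finset.sum_erase_add U _ hu]
        omega
      have hle : ∑ t ∈ U, μ t ≤ ∑ t ∈ U', μ t := by
        rw [hU', Finset.sum_insert hinote, ← Finset.sum_erase_add U _ hu]
        have : μ u ≤ μ i := hμ i u (Fin.le_def.mpr (by omega))
        omega
      calc ∑ t ∈ U, μ t ≤ ∑ t ∈ U', μ t := hle
        _ ≤ topSum μ U'.card := ih _ hsum' U' rfl
        _ = topSum μ U.card := by rw [hcard']

lemma topSum_concave (μ : Fin n → ℤ) (hμ : ∀ i j : Fin n, i ≤ j → μ j ≤ μ i)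
    {i k l u : ℕ} (hik : i ≤ k) (hil : i ≤ l) (hsum : u + i = k + l) (hun : u ≤ n) :
    topSum μ u + topSum μ i ≤ topSum μ k + topSum μ l := by
  have hku : k ≤ u := by omega
  have h1 : topSum μ u = topSum μ k + ∑ j ∈ Finset.Ico k u, mue μ j := by
    rw [topSum, topSum, ← Finset.sum_range_add_sum_Ico _ hku]
  have h2 : topSum μ l = topSum μ i + ∑ j ∈ Finset.Ico i l, mue μ j := by
    rw [topSum, topSum, ← Finset.sum_range_add_sum_Ico _ hil]
  rw [h1, h2]
  have key : ∑ j ∈ Finset.Ico k u, mue μ j ≤ ∑ j ∈ Finset.Ico i l, mue μ j := by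
    rw [Finset.sum_Ico_eq_sum_range, Finset.sum_Ico_eq_sum_range]
    have hlen : u - k = l - i := by omega
    rw [hlen]
    apply Finset.sum_le_sum
    intro j hj
    simp only [Finset.mem_range] at hj
    have hkj : k + j < n := by omega
    have hij : i + j < n := by omega
    rw [mue, mue, dif_pos hkj, dif_pos hij]
    exact hμ ⟨i + j, hij⟩ ⟨k + j, hkj⟩ (Fin.le_def.mpr (by simp; omega))
  omega

lemma tight_union (μ c : Fin n → ℤ) (hμ : ∀ i j : Fin n, i ≤ j → μ j ≤ μ i)
    (hc : maj μ c) {U V : Finset (Fin n)}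
    (hU : ∑ t ∈ U, c t = topSum μ U.card) (hV : ∑ t ∈ V, c t = topSum μ V.card) :
    ∑ t ∈ (U ∪ V), c t = topSum μ (U ∪ V).card := by
  have hadd : ∑ t ∈ (U ∪ V), c t + ∑ t ∈ (U ∩ V), c t = ∑ t ∈ U, c t + ∑ t ∈ V, c t :=
    Finset.sum_union_inter
  have hcards : (U ∪ V).card + (U ∩ V).card = U.card + V.card :=
    Finset.card_union_add_card_inter U V
  have h1 : ∑ t ∈ (U ∪ V), c t ≤ topSum μ (U ∪ V).card := hc.2 _
  have h2 : ∑ t ∈ (U ∩ V), c t ≤ topSum μ (U ∩ V).card := hc.2 _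
  have h3 : topSum μ (U ∪ V).card + topSum μ (U ∩ V).card ≤ topSum μ U.card + topSum μ V.card :=
    topSum_concave μ hμ (Finset.card_le_card Finset.inter_subset_left)
      (Finset.card_le_card Finset.inter_subset_right) hcards (card_le_n _)
  omega

lemma sum_linear (U : Finset (Fin n)) : IsLinearMap ℝ (fun x : Fin n → ℝ => ∑ t ∈ U, x t) := by
  constructor
  · intro x y; simp [Finset.sum_add_distrib]
  · intro c x; simp [Finset.mul_sum]

lemma maj_of_inPmu (μ : Fin n → ℤ) (hμ : ∀ i j : Fin n, i ≤ j → μ j ≤ μ i)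
    {c : Fin n → ℤ} (hc : inPmu n μ c) : maj μ c := by
  constructor
  · -- total sum
    have hsub : Pmu n μ ⊆ {x : Fin n → ℝ | ∑ t, x t = ∑ t, (μ t : ℝ)} := by
      apply convexHull_min
      · rintro x ⟨σ, rfl⟩
        simp only [Set.mem_setOf_eq]
        exact Equiv.sum_comp σ (fun t => ((μ t : ℝ)))
      · exact convex_hyperplane (sum_linear Finset.univ) _
    have := hsub hc
    simp only [Set.mem_setOf_eq] at this
    exact_mod_cast this
  · intro U
    have hsub : Pmu n μ ⊆ {x : Fin n → ℝ | ∑ t ∈ U, x t ≤ (topSum μ U.card : ℝ)} := by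
      apply convexHull_min
      · rintro x ⟨σ, rfl⟩
        simp only [Set.mem_setOf_eq]
        have h1 : ∑ t ∈ U, ((μ (σ t) : ℝ)) = ((∑ t ∈ U, μ (σ t) : ℤ) : ℝ) := by push_cast; rfl
        rw [h1, Int.cast_le]
        have : ∑ t ∈ U, μ (σ t) = ∑ t ∈ U.image σ, μ t :=
          (Finset.sum_image (by intro a _ b _ h; exact σ.injective h)).symm
        rw [this]
        calc ∑ t ∈ U.image σ, μ t ≤ topSum μ (U.image σ).card := subset_sum_le μ hμ _
          _ = topSum μ U.card := by rw [Finset.card_image_of_injective _ σ.injective]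
      · exact convex_halfSpace_le (sum_linear U) _
    have := hsub hc
    simp only [Set.mem_setOf_eq] at this
    exact_mod_cast this

lemma Pmu_comp_perm (μ : Fin n → ℤ) {x : Fin n → ℝ} (hx : x ∈ Pmu n μ)
    (π : Equiv.Perm (Fin n)) : (fun t => x (π t)) ∈ Pmu n μ := by
  have hsub : Pmu n μ ⊆ {y : Fin n → ℝ | (fun t => y (π t)) ∈ Pmu n μ} := by
    apply convexHull_min
    · rintro y ⟨σ, rfl⟩
      exact subset_convexHull ℝ _ ⟨π.trans σ, rfl⟩
    · intro a ha b hb s t hs ht hst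
      have h2 := (convex_convexHull ℝ _) ha hb hs ht hst
      show (fun u => (s • a + t • b) (π u)) ∈ Pmu n μ
      have h3 : (fun u => (s • a + t • b) (π u))
          = s • (fun u => a (π u)) + t • (fun u => b (π u)) := rfl
      rw [h3]; exact h2
  exact hsub hx

lemma topSum_succ (x : Fin n → ℤ) (k : ℕ) : topSum x (k + 1) = topSum x k + mue x k :=
  Finset.sum_range_succ _ _

lemma topSum_zero (x : Fin n → ℤ) : topSum x 0 = 0 := rfl

/-- hard direction of Rado's theorem, antitone case -/
lemma inPmu_of_maj_antitone (μ : Fin n → ℤ) (hμ : ∀ i j : Fin n, i ≤ j → μ j ≤ μ i)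
    (c : Fin n → ℤ) (hcanti : ∀ i j : Fin n, i ≤ j → c j ≤ c i)
    (hsum : ∑ t, c t = ∑ t, μ t)
    (hh : ∀ k, k ≤ n → topSum c k ≤ topSum μ k) : inPmu n μ c := by
  classical
  generalize hW : (∑ k ∈ Finset.range (n + 1), (topSum μ k - topSum c k).toNat) = W
  induction W using Nat.strong_induction_on generalizing c with
  | _ W ih =>
  by_cases hex : ∃ k, k ≤ n ∧ topSum c k < topSum μ k
  · have hexfind : ∃ k, k ≤ n ∧ topSum c k < topSum μ k := hex
    set u := Nat.find hexfind with hu_def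
    obtain ⟨hun, hult⟩ := Nat.find_spec hexfind
    rw [← hu_def] at hun hult
    have hzero : ∀ k, k < u → topSum c k = topSum μ k := by
      intro k hk
      have h1 := Nat.find_min hexfind hk
      push_neg at h1
      exact le_antisymm (hh k (by omega)) (h1 (by omega))
    have hu_pos : 0 < u := by
      rcases Nat.eq_zero_or_pos u with h | h
      · rw [h, topSum_zero, topSum_zero] at hult; omega
      · exact h
    have hvex : ∃ k, u ≤ k ∧ topSum c k = topSum μ k := by
      refine ⟨n, hun, ?_⟩
      rw [topSum_n, topSum_n, hsum]
    set v := Nat.find hvex with hv_def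
    obtain ⟨huv, hveq⟩ := Nat.find_spec hvex
    rw [← hv_def] at huv hveq
    have hvn : v ≤ n := by
      have h2 := Nat.find_min' hvex ⟨hun, by rw [topSum_n, topSum_n, hsum]⟩
      rw [← hv_def] at h2
      omega
    have hpos : ∀ k, u ≤ k → k < v → topSum c k < topSum μ k := by
      intro k hk1 hk2
      have h1 := Nat.find_min hvex hk2
      push_neg at h1
      exact lt_of_le_of_ne (hh k (by omega)) (h1 hk1)
    have huv' : u < v := by
      rcases eq_or_lt_of_le huv with h | h
      · rw [← h] at hveq; omega
      · exact h
    have hpn : u - 1 < n := by omega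
    have hqn : v - 1 < n := by omega
    set P : Fin n := ⟨u - 1, hpn⟩ with hP_def
    set Q : Fin n := ⟨v - 1, hqn⟩ with hQ_def
    have hPQval : (P : ℕ) = u - 1 := rfl
    have hQval : (Q : ℕ) = v - 1 := rfl
    have hPQ : P ≠ Q := by
      intro h
      have := congrArg Fin.val h
      rw [hPQval, hQval] at this; omega
    have hmueP : mue c (u - 1) = c P ∧ mue μ (u - 1) = μ P := by
      constructor <;> simp [mue, hpn, hP_def]
    have hmueQ : mue c (v - 1) = c Q ∧ mue μ (v - 1) = μ Q := by
      constructor <;> simp [mue, hqn, hQ_def]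
    have hcP : c P < μ P := by
      have h1 : topSum c (u - 1) = topSum μ (u - 1) := hzero _ (by omega)
      have h2 : topSum c ((u - 1) + 1) < topSum μ ((u - 1) + 1) := by
        rw [Nat.sub_add_cancel hu_pos]; exact hult
      rw [topSum_succ, topSum_succ, h1, hmueP.1, hmueP.2] at h2
      omega
    have hcQ : μ Q < c Q := by
      have h1 : topSum c (v - 1) < topSum μ (v - 1) := hpos _ (by omega) (by omega)
      have h2 : topSum c ((v - 1) + 1) = topSum μ ((v - 1) + 1) := by
        rw [Nat.sub_add_cancel (by omega : 0 < v)]; exact hveq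
      rw [topSum_succ, topSum_succ, hmueQ.1, hmueQ.2] at h2
      omega
    have hedgeP : ∀ i : Fin n, (i : ℕ) < u - 1 → c P < c i := by
      intro i hi
      have hent : c i = μ i := by
        have e1 : topSum c ((i : ℕ) + 1) = topSum μ ((i : ℕ) + 1) := hzero _ (by omega)
        have e2 : topSum c (i : ℕ) = topSum μ (i : ℕ) := hzero _ (by omega)
        rw [topSum_succ, topSum_succ, e2] at e1
        have h3 : mue c (i : ℕ) = c i := by simp [mue, i.isLt]
        have h4 : mue μ (i : ℕ) = μ i := by simp [mue, i.isLt]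
        omega
      calc c P < μ P := hcP
        _ ≤ μ i := hμ i P (Fin.le_def.mpr (by rw [hPQval]; omega))
        _ = c i := hent.symm
    have hedgeQ : ∀ i : Fin n, (v - 1 : ℕ) < (i : ℕ) → c i < c Q := by
      intro i hi
      have hvlt : v < n := by have := i.isLt; omega
      have hcv : c ⟨v, hvlt⟩ ≤ μ ⟨v, hvlt⟩ := by
        have e1 : topSum c (v + 1) ≤ topSum μ (v + 1) := hh _ (by omega)
        rw [topSum_succ, topSum_succ, hveq] at e1
        have h3 : mue c v = c ⟨v, hvlt⟩ := by simp [mue, hvlt]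
        have h4 : mue μ v = μ ⟨v, hvlt⟩ := by simp [mue, hvlt]
        omega
      have hle1 : (⟨v, hvlt⟩ : Fin n) ≤ i := by
        rw [Fin.le_def]; simp only [Fin.val_mk]; omega
      have hle2 : Q ≤ (⟨v, hvlt⟩ : Fin n) := by
        rw [Fin.le_def]; simp only [Fin.val_mk, hQval]; omega
      calc c i ≤ c ⟨v, hvlt⟩ := hcanti _ i hle1
        _ ≤ μ ⟨v, hvlt⟩ := hcv
        _ ≤ μ Q := hμ Q _ hle2
        _ < c Q := hcQ
    -- the moved vector
    set c' : Fin n → ℤ :=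
      fun t => c t + (if t = P then 1 else 0) - (if t = Q then 1 else 0) with hc'_def
    have hc'P : c' P = c P + 1 := by simp [hc'_def, hPQ]
    have hc'Q : c' Q = c Q - 1 := by simp [hc'_def, Ne.symm hPQ]
    have hc'other : ∀ t, t ≠ P → t ≠ Q → c' t = c t := by
      intro t h1 h2; simp [hc'_def, h1, h2]
    have hPltQ : (P : ℕ) < (Q : ℕ) := by rw [hPQval, hQval]; omega
    have hcQP : c Q ≤ c P := hcanti P Q (Fin.le_def.mpr (by omega))
    -- antitone
    have hanti' : ∀ i j : Fin n, i ≤ j → c' j ≤ c' i := by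
      intro i j hij
      rcases eq_or_lt_of_le hij with rfl | hlt
      · exact le_refl _
      have hvallt : (i : ℕ) < (j : ℕ) := hlt
      have hine : i ≠ j := Fin.ne_of_lt hlt
      by_cases hjP : j = P
      · subst hjP
        have hiP : i ≠ P := hine
        have hiQ : i ≠ Q := by
          intro h; subst h; omega
        rw [hc'P, hc'other i hiP hiQ]
        have := hedgeP i (by omega)
        omega
      by_cases hjQ : j = Q
      · subst hjQ
        have hiQ : i ≠ Q := hine
        rw [hc'Q]
        by_cases hiP : i = P
        · subst hiP; rw [hc'P]; omega
        · rw [hc'other i hiP hiQ]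
          have : c Q ≤ c i := hcanti i Q hij
          omega
      · rw [hc'other j hjP hjQ]
        by_cases hiQ : i = Q
        · subst hiQ
          rw [hc'Q]
          have := hedgeQ j (by rw [← hQval]; omega)
          omega
        · by_cases hiP : i = P
          · subst hiP
            rw [hc'P]
            have := hcanti P j hij
            omega
          · rw [hc'other i hiP hiQ]
            exact hcanti i j hij
    -- total sum
    have hsum' : ∑ t, c' t = ∑ t, μ t := by
      rw [← hsum]
      simp [hc'_def, Finset.sum_add_distrib, Finset.sum_sub_distrib]
    -- partial sums
    have hmue' : ∀ j, j < n →
        mue c' j = mue c j + (if j = u - 1 then 1 else 0) - (if j = v - 1 then 1 else 0) := by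
      intro j hj
      simp only [mue, dif_pos hj, hc'_def, hP_def, hQ_def, Fin.mk.injEq]
    have htop' : ∀ k, k ≤ n → topSum c' k
        = topSum c k + (if u - 1 < k then 1 else 0) - (if v - 1 < k then 1 else 0) := by
      intro k hk
      rw [topSum, topSum]
      rw [Finset.sum_congr rfl (fun j hj => hmue' j (by
        simp only [Finset.mem_range] at hj; omega))]
      rw [Finset.sum_sub_distrib, Finset.sum_add_distrib]
      congr 2
      · simp [Finset.sum_ite_eq' (Finset.range k) (u - 1) (fun _ => (1 : ℤ))]
      · simp [Finset.sum_ite_eq' (Finset.range k) (v - 1) (fun _ => (1 : ℤ))]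
    have hh' : ∀ k, k ≤ n → topSum c' k ≤ topSum μ k := by
      intro k hk
      have h0 := htop' k hk
      have h1 := hh k hk
      by_cases hc1 : u - 1 < k
      · by_cases hc2 : v - 1 < k
        · simp only [if_pos hc1, if_pos hc2] at h0; omega
        · have := hpos k (by omega) (by omega)
          simp only [if_pos hc1, if_neg hc2] at h0; omega
      · have hc2 : ¬ (v - 1 < k) := by omega
        simp only [if_neg hc1, if_neg hc2] at h0; omega
    -- measure decrease
    have hWlt : (∑ k ∈ Finset.range (n + 1), (topSum μ k - topSum c' k).toNat) < W := by
      rw [← hW]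
      apply Finset.sum_lt_sum
      · intro k hk
        simp only [Finset.mem_range] at hk
        have h0 := htop' k (by omega)
        apply Int.toNat_le_toNat
        by_cases hc1 : u - 1 < k
        · by_cases hc2 : v - 1 < k
          · simp only [if_pos hc1, if_pos hc2] at h0; omega
          · simp only [if_pos hc1, if_neg hc2] at h0; omega
        · have hc2 : ¬ (v - 1 < k) := by omega
          simp only [if_neg hc1, if_neg hc2] at h0; omega
      · refine ⟨u, Finset.mem_range.mpr (by omega), ?_⟩
        have h0 := htop' u (by omega)
        have hc1 : u - 1 < u := by omega
        have hc2 : ¬ (v - 1 < u) := by omega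
        simp only [if_pos hc1, if_neg hc2] at h0
        omega
    -- induction
    have hc'mem : inPmu n μ c' := ih _ hWlt c' hanti' hsum' hh' rfl
    -- swap
    set τ : Equiv.Perm (Fin n) := Equiv.swap P Q with hτ_def
    have hc''mem : (fun t => ((c' (τ t) : ℤ) : ℝ)) ∈ Pmu n μ := Pmu_comp_perm μ hc'mem τ
    -- convex combination
    set g : ℝ := (c P : ℝ) - (c Q : ℝ) + 2 with hg_def
    have hg2 : (2 : ℝ) ≤ g := by
      rw [hg_def]
      have : (c Q : ℝ) ≤ (c P : ℝ) := by exact_mod_cast hcQP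
      linarith
    have hgpos : (0 : ℝ) < g := by linarith
    have hgne : g ≠ 0 := ne_of_gt hgpos
    have hcomb : (fun t => ((c t : ℤ) : ℝ))
        = (1 - 1/g) • (fun t => ((c' t : ℤ) : ℝ)) + (1/g) • (fun t => ((c' (τ t) : ℤ) : ℝ)) := by
      funext t
      simp only [Pi.add_apply, Pi.smul_apply, smul_eq_mul]
      by_cases h1 : t = P
      · subst h1
        rw [show τ P = Q from Equiv.swap_apply_left P Q, hc'P, hc'Q]
        push_cast
        field_simp
        ring
      by_cases h2 : t = Q
      · subst h2
        rw [show τ Q = P from Equiv.swap_apply_right P Q, hc'P, hc'Q]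
        push_cast
        field_simp
        ring
      · rw [show τ t = t from Equiv.swap_apply_of_ne_of_ne h1 h2, hc'other t h1 h2]
        field_simp
        ring
    show (fun t => ((c t : ℤ) : ℝ)) ∈ Pmu n μ
    rw [hcomb]
    exact (convex_convexHull ℝ _) hc'mem hc''mem
      (by rw [sub_nonneg, div_le_one hgpos]; linarith) (by positivity) (by ring)
  · push_neg at hex
    have hall : ∀ k, k ≤ n → topSum c k = topSum μ k := by
      intro k hk; exact le_antisymm (hh k hk) (hex k hk)
    have hceq : ∀ t, c t = μ t := by
      intro t
      have e1 := hall ((t : ℕ) + 1) (by omega)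
      have e2 := hall (t : ℕ) (by omega)
      rw [topSum_succ, topSum_succ, e2] at e1
      have h3 : mue c (t : ℕ) = c t := by simp [mue, t.isLt]
      have h4 : mue μ (t : ℕ) = μ t := by simp [mue, t.isLt]
      omega
    exact subset_convexHull ℝ _ ⟨Equiv.refl _, by funext t; simp [hceq t]⟩

/-- hard direction of Rado's theorem -/
lemma inPmu_of_maj (μ : Fin n → ℤ) (hμ : ∀ i j : Fin n, i ≤ j → μ j ≤ μ i)
    {c : Fin n → ℤ} (hc : maj μ c) : inPmu n μ c := by
  classical
  set σ : Equiv.Perm (Fin n) := Tuple.sort (fun t => -c t) with hσ_def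
  have hmono : Monotone ((fun t => -c t) ∘ σ) := Tuple.monotone_sort _
  have hanti : ∀ i j : Fin n, i ≤ j → c (σ j) ≤ c (σ i) := by
    intro i j hij
    have := hmono hij
    simp only [Function.comp_apply] at this
    omega
  have hc2 : inPmu n μ (fun t => c (σ t)) := by
    apply inPmu_of_maj_antitone μ hμ _ hanti
    · rw [← hc.1]; exact Equiv.sum_comp σ c
    · intro k hk
      rw [topSum_eq_filter _ hk]
      have himg : ∑ t ∈ univ.filter (fun t : Fin n => (t : ℕ) < k), c (σ t)
          = ∑ t ∈ (univ.filter (fun t : Fin n => (t : ℕ) < k)).image σ, c t :=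
        (Finset.sum_image (by intro a _ b _ h; exact σ.injective h)).symm
      rw [himg]
      calc ∑ t ∈ (univ.filter (fun t : Fin n => (t : ℕ) < k)).image σ, c t
          ≤ topSum μ ((univ.filter (fun t : Fin n => (t : ℕ) < k)).image σ).card := hc.2 _
        _ = topSum μ k := by
            rw [Finset.card_image_of_injective _ σ.injective, filter_lt_card hk]
  have hfin := Pmu_comp_perm μ hc2 σ⁻¹
  have heq : (fun t => ((c t : ℤ) : ℝ)) = fun t => ((c (σ (σ⁻¹ t)) : ℤ) : ℝ) := by
    funext t
    rw [← Equiv.Perm.mul_apply σ σ⁻¹ t, mul_inv_cancel, Equiv.Perm.one_apply]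
  show (fun t => ((c t : ℤ) : ℝ)) ∈ Pmu n μ
  rw [heq]
  exact hfin

lemma step_lemma (μ a b : Fin n → ℤ) (hμ : ∀ i j : Fin n, i ≤ j → μ j ≤ μ i)
    (S T : Finset (Fin n)) (hST : S.card = T.card)
    (hb : ∀ t, b t = a t + (if t ∈ S then 1 else 0) - (if t ∈ T then 1 else 0))
    (ha : maj μ a) (hbm : maj μ b) {t0 : Fin n} (ht0 : t0 ∈ T) :
    ∃ s ∈ S, maj μ (fun t => a t + (if t = s then 1 else 0) - (if t = t0 then 1 else 0)) := by
  classical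
  by_cases ht0S : t0 ∈ S
  · refine ⟨t0, ht0S, ?_⟩
    have : (fun t => a t + (if t = t0 then 1 else 0) - (if t = t0 then 1 else 0)) = a := by
      funext t; omega
    rw [this]; exact ha
  by_contra hcon
  push_neg at hcon
  have hviol : ∀ s ∈ S, ∃ U : Finset (Fin n),
      s ∈ U ∧ t0 ∉ U ∧ ∑ t ∈ U, a t = topSum μ U.card := by
    intro s hs
    have hst0 : s ≠ t0 := fun h => ht0S (h ▸ hs)
    have h1 := hcon s hs
    rw [maj] at h1
    push_neg at h1
    have hsum' : ∑ t, (fun t => a t + (if t = s then 1 else 0) - (if t = t0 then 1 else 0)) t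
        = ∑ t, μ t := by
      simp only [Finset.sum_sub_distrib, Finset.sum_add_distrib,
        Finset.sum_ite_eq' Finset.univ s (fun _ => (1 : ℤ)),
        Finset.sum_ite_eq' Finset.univ t0 (fun _ => (1 : ℤ))]
      simp [ha.1]
    obtain ⟨U, hU⟩ := h1 hsum'
    have hsplit : ∑ t ∈ U, (a t + (if t = s then 1 else 0) - (if t = t0 then 1 else 0))
        = ∑ t ∈ U, a t + (if s ∈ U then 1 else 0) - (if t0 ∈ U then 1 else 0) := by
      simp only [Finset.sum_sub_distrib, Finset.sum_add_distrib,
        Finset.sum_ite_eq' U s (fun _ => (1 : ℤ)),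
        Finset.sum_ite_eq' U t0 (fun _ => (1 : ℤ))]
    rw [hsplit] at hU
    have haU := ha.2 U
    by_cases hsU : s ∈ U
    · by_cases ht0U : t0 ∈ U
      · simp only [if_pos hsU, if_pos ht0U] at hU; omega
      · simp only [if_pos hsU, if_neg ht0U] at hU
        exact ⟨U, hsU, ht0U, by omega⟩
    · by_cases ht0U : t0 ∈ U <;> simp only [hsU, ht0U] at hU <;> simp at hU <;> omega
  -- build a tight superset of S avoiding t0
  have hSne : S.Nonempty := by
    have : T.Nonempty := ⟨t0, ht0⟩
    rw [← Finset.card_pos] at this ⊢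
    omega
  have hbig : ∀ (S' : Finset (Fin n)), S'.Nonempty → S' ⊆ S → ∃ U : Finset (Fin n),
      S' ⊆ U ∧ t0 ∉ U ∧ ∑ t ∈ U, a t = topSum μ U.card := by
    intro S' hne
    induction hne using Finset.Nonempty.cons_induction with
    | singleton s =>
        intro hsub
        obtain ⟨U, h1, h2, h3⟩ := hviol s (hsub (by simp))
        exact ⟨U, by simp [h1], h2, h3⟩
    | cons s S' hs hne ih =>
        intro hsub
        have hsub' : S' ⊆ S := fun x hx => hsub (Finset.mem_cons_of_mem hx)
        obtain ⟨U, h1, h2, h3⟩ := ih hsub'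
        obtain ⟨V, g1, g2, g3⟩ := hviol s (hsub (Finset.mem_cons_self s S'))
        refine ⟨U ∪ V, ?_, ?_, tight_union μ a hμ ha h3 g3⟩
        · intro x hx
          rcases Finset.mem_cons.mp hx with rfl | hx
          · exact Finset.mem_union_right _ g1
          · exact Finset.mem_union_left _ (h1 hx)
        · simp [h2, g2]
  obtain ⟨U, hSU, ht0U, htight⟩ := hbig S hSne (le_refl _)
  -- contradiction with b
  have hsplit : ∑ t ∈ U, b t = ∑ t ∈ U, a t + ((U ∩ S).card : ℤ) - ((U ∩ T).card : ℤ) := by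
    rw [Finset.sum_congr rfl (fun t _ => hb t)]
    simp only [Finset.sum_sub_distrib, Finset.sum_add_distrib]
    congr 2
    · rw [Finset.sum_ite_mem]; simp
    · rw [Finset.sum_ite_mem]; simp
  have hUS : U ∩ S = S := Finset.inter_eq_right.mpr hSU
  have hUT : (U ∩ T).card < T.card := by
    apply Finset.card_lt_card
    rw [Finset.ssubset_iff_of_subset Finset.inter_subset_right]
    exact ⟨t0, ht0, fun h => ht0U (Finset.mem_of_mem_inter_left h)⟩
  have hfin := hbm.2 U
  rw [hsplit, hUS, htight] at hfin
  have : (S.card : ℤ) = (T.card : ℤ) := by exact_mod_cast hST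
  omega

lemma chain_lemma (μ a b : Fin n → ℤ) (hμ : ∀ i j : Fin n, i ≤ j → μ j ≤ μ i)
    (S T : Finset (Fin n)) (m : ℕ) (τ : ℕ → Fin n)
    (hτ : ∀ k l, k < m → l < m → τ k = τ l → k = l)
    (hT : T = (Finset.range m).image τ)
    (hS : S.card = m)
    (hb : ∀ t, b t = a t + (if t ∈ S then 1 else 0) - (if t ∈ T then 1 else 0))
    (ha : maj μ a) (hbm : maj μ b) :
    ∃ S' : ℕ → Finset (Fin n),
      S' 0 = ∅ ∧ (∀ k, k < m → S' k ⊆ S' (k + 1)) ∧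
      (∀ k, k ≤ m → (S' k).card = k ∧ S' k ⊆ S ∧
        maj μ (fun t => a t + (if t ∈ S' k then 1 else 0)
          - (if t ∈ (Finset.range k).image τ then 1 else 0))) := by
  classical
  have hTcard : T.card = m := by
    rw [hT, Finset.card_image_of_injOn, Finset.card_range]
    intro k hk l hl h
    exact hτ k l (Finset.mem_range.mp hk) (Finset.mem_range.mp hl) h
  have hTk : ∀ j, j ≤ m → ((Finset.range j).image τ).card = j := by
    intro j hj
    rw [Finset.card_image_of_injOn, Finset.card_range]
    intro k hk l hl h
    exact hτ k l (by simp at hk; omega) (by simp at hl; omega) h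
  have hTksub : ∀ j, j ≤ m → (Finset.range j).image τ ⊆ T := by
    intro j hj
    rw [hT]
    exact Finset.image_subset_image (by intro x hx; simp at hx ⊢; omega)
  -- build chains of length j by induction
  suffices h : ∀ j, j ≤ m → ∃ S' : ℕ → Finset (Fin n),
      S' 0 = ∅ ∧ (∀ k, k < j → S' k ⊆ S' (k + 1)) ∧
      (∀ k, k ≤ j → (S' k).card = k ∧ S' k ⊆ S ∧
        maj μ (fun t => a t + (if t ∈ S' k then 1 else 0)
          - (if t ∈ (Finset.range k).image τ then 1 else 0))) by
    exact h m (le_refl m)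
  intro j
  induction j with
  | zero =>
      intro _
      refine ⟨fun _ => ∅, rfl, by omega, ?_⟩
      intro k hk
      rw [Nat.le_zero] at hk
      subst hk
      refine ⟨rfl, Finset.empty_subset _, ?_⟩
      have : (fun t => a t + (if t ∈ (∅ : Finset (Fin n)) then 1 else 0)
          - (if t ∈ (Finset.range 0).image τ then 1 else 0)) = a := by
        funext t; simp
      rw [this]; exact ha
  | succ j ihj =>
      intro hjm
      obtain ⟨S', h0, hmono, hprops⟩ := ihj (by omega)
      obtain ⟨hcardA, hAS, hmajA⟩ := hprops j (le_refl j)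
      set A := S' j with hA_def
      set Tj := (Finset.range j).image τ with hTj_def
      set cj : Fin n → ℤ := fun t => a t + (if t ∈ A then 1 else 0)
          - (if t ∈ Tj then 1 else 0) with hcj_def
      -- apply the step lemma with S \ A, T \ Tj
      have hcard1 : (S \ A).card = (T \ Tj).card := by
        rw [Finset.card_sdiff_of_subset hAS, Finset.card_sdiff_of_subset (hTksub j (by omega))]
        rw [hS, hTcard, hTk j (by omega), hcardA]
      have hb' : ∀ t, b t = cj t + (if t ∈ S \ A then 1 else 0)
          - (if t ∈ T \ Tj then 1 else 0) := by
        intro t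
        rw [hb t, hcj_def]
        simp only [Finset.mem_sdiff]
        by_cases h1 : t ∈ S <;> by_cases h2 : t ∈ A <;>
          by_cases h3 : t ∈ T <;> by_cases h4 : t ∈ Tj <;>
          first
          | (exfalso; exact h1 (hAS h2))
          | (exfalso; exact h3 (hTksub j (by omega) h4))
          | simp [h1, h2, h3, h4]
      have ht0mem : τ j ∈ T \ Tj := by
        rw [Finset.mem_sdiff]
        constructor
        · rw [hT]; exact Finset.mem_image_of_mem τ (by simp; omega)
        · rw [hTj_def]
          intro h
          obtain ⟨l, hl, hlj⟩ := Finset.mem_image.mp h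
          simp only [Finset.mem_range] at hl
          have := hτ l j (by omega) (by omega) hlj
          omega
      obtain ⟨s, hsmem, hsmaj⟩ := step_lemma μ cj b hμ (S \ A) (T \ Tj) hcard1 hb' hmajA hbm ht0mem
      rw [Finset.mem_sdiff] at hsmem
      -- new chain
      refine ⟨fun k => if k ≤ j then S' k else insert s A, by simp [h0], ?_, ?_⟩
      · intro k hk
        by_cases hkj : k < j
        · simp only [if_pos (by omega : k ≤ j), if_pos (by omega : k + 1 ≤ j)]
          exact hmono k hkj
        · have hkeq : k = j := by omega
          subst hkeq
          simp only [le_refl, if_pos, if_neg (by omega : ¬ k + 1 ≤ k)]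
          exact Finset.subset_insert _ _
      · intro k hk
        by_cases hkj : k ≤ j
        · simp only [if_pos hkj]
          exact hprops k hkj
        · have hkeq : k = j + 1 := by omega
          subst hkeq
          simp only [if_neg (by omega : ¬ j + 1 ≤ j)]
          refine ⟨?_, ?_, ?_⟩
          · rw [Finset.card_insert_of_notMem hsmem.2, hcardA]
          · intro x hx
            rcases Finset.mem_insert.mp hx with rfl | hx
            · exact hsmem.1
            · exact hAS hx
          · have heq : (fun t => a t + (if t ∈ insert s A then 1 else 0)
                - (if t ∈ (Finset.range (j + 1)).image τ then 1 else 0))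
                = (fun t => cj t + (if t = s then 1 else 0) - (if t = τ j then 1 else 0)) := by
              funext t
              rw [hcj_def]
              have himg : (Finset.range (j + 1)).image τ = insert (τ j) Tj := by
                rw [hTj_def, Finset.range_add_one, Finset.image_insert]
              rw [himg]
              simp only [Finset.mem_insert]
              have ht0Tj : τ j ∉ Tj := (Finset.mem_sdiff.mp ht0mem).2
              have e1 : (if (t = s ∨ t ∈ A) then (1:ℤ) else 0)
                  = (if t = s then 1 else 0) + (if t ∈ A then 1 else 0) := by
                by_cases h1 : t = s
                · subst h1; simp [hsmem.2]
                · simp [h1]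
              have e2 : (if (t = τ j ∨ t ∈ Tj) then (1:ℤ) else 0)
                  = (if t = τ j then 1 else 0) + (if t ∈ Tj then 1 else 0) := by
                by_cases h3 : t = τ j
                · subst h3; simp [ht0Tj]
                · simp [h3]
              rw [e1, e2]
              ring
            rw [heq]
            exact hsmaj

lemma omegaVec_eq (i : ℤ) (t : Fin n) :
    omegaVec n i t = (i - ((t : ℤ) + 1)) / n + 1 := by
  rw [omegaVec, Int.fdiv_eq_ediv_of_nonneg _ (by positivity)]

lemma omegaVec_add_n (hn : 0 < n) (i : ℤ) (t : Fin n) :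
    omegaVec n (i + n) t = omegaVec n i t + 1 := by
  rw [omegaVec_eq, omegaVec_eq]
  have hn' : (0 : ℤ) < (n : ℤ) := by exact_mod_cast hn
  have h : i + (n : ℤ) - ((t : ℤ) + 1) = (i - ((t : ℤ) + 1)) + 1 * (n : ℤ) := by ring
  rw [h, Int.add_mul_ediv_right _ _ hn'.ne']

lemma ediv_succ (hn : 0 < n) (x : ℤ) :
    (x + 1) / (n : ℤ) = x / n + (if (n : ℤ) ∣ (x + 1) then 1 else 0) := by
  have hn' : (0 : ℤ) < (n : ℤ) := by exact_mod_cast hn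
  have hq := Int.mul_ediv_add_emod x n
  set q := x / (n : ℤ) with hq_def
  set r := x % (n : ℤ) with hr_def
  have hr0 : 0 ≤ r := Int.emod_nonneg x hn'.ne'
  have hrn : r < n := Int.emod_lt_of_pos x hn'
  by_cases hcase : r = (n : ℤ) - 1
  · have hdvd : (n : ℤ) ∣ (x + 1) := ⟨q + 1, by rw [← hq, hcase]; ring⟩
    have hx1 : x + 1 = (q + 1) * n := by rw [← hq, hcase]; ring
    rw [if_pos hdvd, hx1, Int.mul_ediv_cancel _ hn'.ne']
  · have hx1 : x + 1 = (r + 1) + q * (n : ℤ) := by rw [← hq]; ring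
    have hdiv : (x + 1) / (n : ℤ) = q := by
      rw [hx1, Int.add_mul_ediv_right _ _ hn'.ne',
        Int.ediv_eq_zero_of_lt (by omega) (by omega)]
      omega
    have hndvd : ¬ (n : ℤ) ∣ (x + 1) := by
      rintro ⟨c, hc⟩
      have hdr : (n : ℤ) ∣ (r + 1) := ⟨c - q, by rw [mul_sub]; omega⟩
      have := Int.le_of_dvd (by omega) hdr
      omega
    rw [if_neg hndvd, hdiv]
    omega

lemma omegaVec_succ (hn : 0 < n) (i : ℤ) (t : Fin n) :
    omegaVec n (i + 1) t = omegaVec n i t + (if (n : ℤ) ∣ (i - (t : ℤ)) then 1 else 0) := by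
  rw [omegaVec_eq, omegaVec_eq]
  have h : i + 1 - ((t : ℤ) + 1) = (i - ((t : ℤ) + 1)) + 1 := by ring
  rw [h, ediv_succ hn]
  have h2 : i - ((t : ℤ) + 1) + 1 = i - (t : ℤ) := by ring
  rw [h2]
  ring

/-- the residue enumeration -/
def tau (hn : 0 < n) (j : ℤ) (l : ℕ) : Fin n :=
  ⟨((j + l) % (n : ℤ)).toNat, by
    have hn' : (0 : ℤ) < (n : ℤ) := by exact_mod_cast hn
    have h1 : 0 ≤ (j + l) % (n : ℤ) := Int.emod_nonneg _ hn'.ne'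
    have h2 : (j + l) % (n : ℤ) < n := Int.emod_lt_of_pos _ hn'
    omega⟩

lemma tau_spec (hn : 0 < n) (j : ℤ) (l : ℕ) (t : Fin n) :
    tau hn j l = t ↔ (n : ℤ) ∣ (j + l - (t : ℤ)) := by
  have hn' : (0 : ℤ) < (n : ℤ) := by exact_mod_cast hn
  have h1 : 0 ≤ (j + l) % (n : ℤ) := Int.emod_nonneg _ hn'.ne'
  have h2 : (j + l) % (n : ℤ) < n := Int.emod_lt_of_pos _ hn'
  have ht : (t : ℤ) % (n : ℤ) = (t : ℤ) :=
    Int.emod_eq_of_lt (by positivity) (by exact_mod_cast t.isLt)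
  constructor
  · intro h
    have hval : ((j + l) % (n : ℤ)).toNat = (t : ℕ) := congrArg Fin.val h
    have hval' : (j + l) % (n : ℤ) = (t : ℤ) := by omega
    have hz : (j + l - (t : ℤ)) % (n : ℤ) = 0 := by
      rw [Int.sub_emod, hval', ht, sub_self, Int.zero_emod]
    exact Int.dvd_of_emod_eq_zero hz
  · intro hd
    have hd0 : (j + l - (t : ℤ)) % (n : ℤ) = 0 := Int.emod_eq_zero_of_dvd hd
    have h5 : (j + l) % (n : ℤ) = (t : ℤ) % (n : ℤ) :=
      Int.emod_eq_emod_iff_emod_sub_eq_zero.mpr hd0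
    apply Fin.ext
    show ((j + l) % (n : ℤ)).toNat = (t : ℕ)
    rw [h5, ht]
    omega

lemma tau_inj (hn : 0 < n) (j : ℤ) {k l : ℕ} (hk : k < n) (hl : l < n)
    (h : tau hn j k = tau hn j l) : k = l := by
  have h1 : (n : ℤ) ∣ (j + k - (tau hn j l : ℤ)) := (tau_spec hn j k _).mp h
  have h2 : (n : ℤ) ∣ (j + l - (tau hn j l : ℤ)) := (tau_spec hn j l _).mp rfl
  have h3 : (n : ℤ) ∣ ((k : ℤ) - l) := by
    have h4 := dvd_sub h1 h2
    have he : (j + k - (tau hn j l : ℤ)) - (j + l - (tau hn j l : ℤ)) = (k : ℤ) - l := by ring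
    rwa [he] at h4
  rcases h3 with ⟨c, hc⟩
  have hkz : (k : ℤ) < n := by exact_mod_cast hk
  have hlz : (l : ℤ) < n := by exact_mod_cast hl
  have hk0 : (0:ℤ) ≤ (k:ℤ) := by positivity
  have hl0 : (0:ℤ) ≤ (l:ℤ) := by positivity
  have hcb : c = 0 := by
    rcases lt_trichotomy c 0 with h | h | h
    · nlinarith
    · exact h
    · nlinarith
  rw [hcb, mul_zero] at hc
  omega

lemma tau_shift (hn : 0 < n) (j : ℤ) : tau hn (j + n) = tau hn j := by
  funext l
  apply Fin.ext
  show (((j + (n : ℤ)) + l) % (n : ℤ)).toNat = ((j + l) % (n : ℤ)).toNat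
  congr 1
  have h : j + (n : ℤ) + l = (j + l) + 1 * (n : ℤ) := by ring
  rw [h, Int.add_mul_emod_self_right]

lemma omegaVec_image (hn : 0 < n) (j : ℤ) (k : ℕ) (hk : k ≤ n) (t : Fin n) :
    omegaVec n (j + k) t = omegaVec n j t
      + (if t ∈ (Finset.range k).image (tau hn j) then 1 else 0) := by
  induction k with
  | zero => simp
  | succ k ihk =>
      have hk' : k ≤ n := by omega
      have hstep : omegaVec n (j + (k + 1 : ℕ)) t
          = omegaVec n (j + k) t + (if (n : ℤ) ∣ (j + k - (t : ℤ)) then 1 else 0) := by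
        have h : (j + ((k : ℕ) + 1 : ℕ) : ℤ) = (j + k) + 1 := by push_cast; ring
        rw [h, omegaVec_succ hn]
      rw [hstep, ihk hk']
      have himg : (Finset.range (k + 1)).image (tau hn j)
          = insert (tau hn j k) ((Finset.range k).image (tau hn j)) := by
        rw [Finset.range_add_one, Finset.image_insert]
      rw [himg]
      simp only [Finset.mem_insert]
      by_cases h1 : t = tau hn j k
      · subst h1
        have hdvd : (n : ℤ) ∣ (j + k - (tau hn j k : ℤ)) := (tau_spec hn j k _).mp rfl
        rw [if_pos hdvd]
        have hnot : tau hn j k ∉ (Finset.range k).image (tau hn j) := by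
          intro h
          obtain ⟨l, hl, hlk⟩ := Finset.mem_image.mp h
          simp only [Finset.mem_range] at hl
          have := tau_inj hn j (by omega) (by omega) hlk
          omega
        rw [if_neg hnot, if_pos (by left; rfl)]
        ring
      · have hndvd : ¬ (n : ℤ) ∣ (j + k - (t : ℤ)) := by
          intro h
          exact h1 ((tau_spec hn j k t).mpr h).symm
        rw [if_neg hndvd]
        have hiff : (t = tau hn j k ∨ t ∈ (Finset.range k).image (tau hn j))
            ↔ t ∈ (Finset.range k).image (tau hn j) := or_iff_right h1
        rw [if_congr hiff rfl rfl]
        ring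

open Classical in
noncomputable def chainF (n : ℕ) (μ a b : Fin n → ℤ) (S T : Finset (Fin n)) (m : ℕ)
    (τ : ℕ → Fin n) : ℕ → Finset (Fin n) :=
  if h : (∀ i j : Fin n, i ≤ j → μ j ≤ μ i) ∧
      (∀ k l, k < m → l < m → τ k = τ l → k = l) ∧
      T = (Finset.range m).image τ ∧ S.card = m ∧
      (∀ t, b t = a t + (if t ∈ S then 1 else 0) - (if t ∈ T then 1 else 0)) ∧
      maj μ a ∧ maj μ b
  then Classical.choose (chain_lemma μ a b h.1 S T m τ h.2.1 h.2.2.1 h.2.2.2.1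
    h.2.2.2.2.1 h.2.2.2.2.2.1 h.2.2.2.2.2.2)
  else fun _ => ∅

lemma chainF_spec {μ a b : Fin n → ℤ} {S T : Finset (Fin n)} {m : ℕ} {τ : ℕ → Fin n}
    (h1 : ∀ i j : Fin n, i ≤ j → μ j ≤ μ i)
    (h2 : ∀ k l, k < m → l < m → τ k = τ l → k = l)
    (h3 : T = (Finset.range m).image τ)
    (h4 : S.card = m)
    (h5 : ∀ t, b t = a t + (if t ∈ S then 1 else 0) - (if t ∈ T then 1 else 0))
    (h6 : maj μ a) (h7 : maj μ b) :
    (chainF n μ a b S T m τ) 0 = ∅ ∧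
    (∀ k, k < m → (chainF n μ a b S T m τ) k ⊆ (chainF n μ a b S T m τ) (k + 1)) ∧
    (∀ k, k ≤ m → ((chainF n μ a b S T m τ) k).card = k ∧ (chainF n μ a b S T m τ) k ⊆ S ∧
      maj μ (fun t => a t + (if t ∈ (chainF n μ a b S T m τ) k then 1 else 0)
        - (if t ∈ (Finset.range k).image τ then 1 else 0))) := by
  classical
  have h : (∀ i j : Fin n, i ≤ j → μ j ≤ μ i) ∧
      (∀ k l, k < m → l < m → τ k = τ l → k = l) ∧
      T = (Finset.range m).image τ ∧ S.card = m ∧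
      (∀ t, b t = a t + (if t ∈ S then 1 else 0) - (if t ∈ T then 1 else 0)) ∧
      maj μ a ∧ maj μ b := ⟨h1, h2, h3, h4, h5, h6, h7⟩
  rw [chainF]
  rw [dif_pos h]
  exact Classical.choose_spec (chain_lemma μ a b h.1 S T m τ h.2.1 h.2.2.1 h.2.2.2.1
    h.2.2.2.2.1 h.2.2.2.2.2.1 h.2.2.2.2.2.2)

lemma find_congr' {p q : ℕ → Prop} [DecidablePred p] [DecidablePred q]
    (hp : ∃ k, p k) (hq : ∃ k, q k) (h : ∀ k, p k ↔ q k) : Nat.find hp = Nat.find hq :=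
  le_antisymm (Nat.find_le ((h _).mpr (Nat.find_spec hq)))
    (Nat.find_le ((h _).mp (Nat.find_spec hp)))

end PRS

open PRS Finset in
theorem perm_restriction_surjective (n : ℕ) (hn : 1 ≤ n)
    (μ : Fin n → ℤ) (hμ : ∀ i j : Fin n, i ≤ j → μ j ≤ μ i)
    (I J : Set ℤ) (hJI : J ⊆ I)
    (hIper : IsPeriodic n I) (hJper : IsPeriodic n J)
    (hIne : I.Nonempty) (hJne : J.Nonempty)
    (w : ℤ → Fin n → ℤ) (hw : IsFace n J w)
    (hwPerm : ∀ j ∈ J, inPmu n μ (fun t => w j t - omegaVec n j t)) :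
    ∃ v : ℤ → Fin n → ℤ,
      IsFace n I v ∧
      (∀ i ∈ I, inPmu n μ (fun t => v i t - omegaVec n i t)) ∧
      (∀ j ∈ J, v j = w j) := by
  classical
  obtain ⟨hw1, hw2, hw3⟩ := hw
  have hn0 : 0 < n := hn
  have hnz : (0 : ℤ) < (n : ℤ) := by exact_mod_cast hn
  have hJup : ∀ j, j ∈ J → (j + (n : ℤ)) ∈ J := fun j hj => (hJper j).mp hj
  have hJdown : ∀ j, j ∈ J → (j - (n : ℤ)) ∈ J := by
    intro j hj
    apply (hJper (j - n)).mpr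
    have h : j - (n : ℤ) + n = j := by ring
    rw [h]; exact hj
  have hJdownK : ∀ j, j ∈ J → ∀ K : ℕ, (j - K * (n : ℤ)) ∈ J := by
    intro j hj K
    induction K with
    | zero => simpa using hj
    | succ K ih =>
        have h2 := hJdown _ ih
        have h : j - K * (n : ℤ) - n = j - ((K : ℕ) + 1 : ℕ) * n := by push_cast; ring
        rwa [h] at h2
  have hJupK : ∀ j, j ∈ J → ∀ K : ℕ, (j + K * (n : ℤ)) ∈ J := by
    intro j hj K
    induction K with
    | zero => simpa using hj
    | succ K ih =>
        have h2 := hJup _ ih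
        have h : j + K * (n : ℤ) + n = j + ((K : ℕ) + 1 : ℕ) * n := by push_cast; ring
        rwa [h] at h2
  have hKn : ∀ K : ℕ, (K : ℤ) ≤ K * n := by
    intro K
    have h2 : (K : ℤ) * 1 ≤ (K : ℤ) * n := by
      apply mul_le_mul_of_nonneg_left _ (by positivity)
      exact_mod_cast hn
    omega
  have hprev_ex : ∀ i : ℤ, ∃ k : ℕ, (i - (k : ℤ)) ∈ J := by
    intro i
    obtain ⟨j, hj⟩ := hJne
    set K := (j - i).toNat with hK
    have hmem := hJdownK j hj K
    have hle : j - K * (n : ℤ) ≤ i := by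
      have h1 : (j - i : ℤ) ≤ (K : ℤ) := Int.self_le_toNat _
      have h2 := hKn K
      omega
    refine ⟨(i - (j - K * n)).toNat, ?_⟩
    have h3 : ((i - (j - K * (n : ℤ))).toNat : ℤ) = i - (j - K * n) :=
      Int.toNat_of_nonneg (by omega)
    rw [h3]
    have h : i - (i - (j - K * (n : ℤ))) = j - K * n := by ring
    rw [h]; exact hmem
  have hnext_ex : ∀ j : ℤ, ∃ k : ℕ, (j + 1 + (k : ℤ)) ∈ J := by
    intro j
    obtain ⟨j', hj'⟩ := hJne
    set K := (j + 1 - j').toNat with hK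
    have hmem := hJupK j' hj' K
    have hge : j + 1 ≤ j' + K * (n : ℤ) := by
      have h1 : (j + 1 - j' : ℤ) ≤ (K : ℤ) := Int.self_le_toNat _
      have h2 := hKn K
      omega
    refine ⟨(j' + K * n - (j + 1)).toNat, ?_⟩
    have h3 : ((j' + K * (n : ℤ) - (j + 1)).toNat : ℤ) = j' + K * n - (j + 1) :=
      Int.toNat_of_nonneg (by omega)
    rw [h3]
    have h : j + 1 + (j' + K * (n : ℤ) - (j + 1)) = j' + K * n := by ring
    rw [h]; exact hmem
  -- basic functions
  set d : ℤ → ℕ := fun i => Nat.find (hprev_ex i) with hd_def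
  set g : ℤ → ℕ := fun j => 1 + Nat.find (hnext_ex j) with hg_def
  set p : ℤ → ℤ := fun i => i - (d i : ℤ) with hp_def
  set q : ℤ → ℤ := fun j => j + (g j : ℤ) with hq_def
  have hp_mem : ∀ i, p i ∈ J := fun i => Nat.find_spec (hprev_ex i)
  have hd_min : ∀ i (k : ℕ), k < d i → (i - (k : ℤ)) ∉ J :=
    fun i k hk => Nat.find_min (hprev_ex i) hk
  have hp_le : ∀ i, p i ≤ i := by
    intro i
    show i - (d i : ℤ) ≤ i
    omega
  have hq_mem : ∀ j, q j ∈ J := by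
    intro j
    have h := Nat.find_spec (hnext_ex j)
    have he : j + 1 + (Nat.find (hnext_ex j) : ℤ) = q j := by
      rw [hq_def, hg_def]; push_cast; ring
    rwa [he] at h
  have hq_gt : ∀ j, j < q j := by
    intro j; rw [hq_def, hg_def]; push_cast; omega
  have hq_min : ∀ j (x : ℤ), j < x → x < q j → x ∉ J := by
    intro j x h1 h2 hx
    have hk : ((x - j - 1).toNat : ℤ) = x - j - 1 := Int.toNat_of_nonneg (by omega)
    have hqe : (q j : ℤ) = j + 1 + (Nat.find (hnext_ex j) : ℤ) := by
      rw [hq_def, hg_def]; push_cast; ring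
    have hlt : (x - j - 1).toNat < Nat.find (hnext_ex j) := by omega
    apply Nat.find_min (hnext_ex j) hlt
    have h : j + 1 + ((x - j - 1).toNat : ℤ) = x := by omega
    rw [h]; exact hx
  have hd_lt : ∀ i, d i < n := by
    intro i
    by_contra hcon
    push_neg at hcon
    have h2 := hJup _ (hp_mem i)
    have hk : (d i - n : ℕ) < d i := by omega
    apply hd_min i (d i - n) hk
    have h : i - ((d i - n : ℕ) : ℤ) = p i + n := by
      rw [hp_def]; push_cast [Nat.cast_sub hcon]; ring
    rw [h]; exact h2
  have hd_J : ∀ j, j ∈ J → d j = 0 := by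
    intro j hj
    have h : (j - ((0 : ℕ) : ℤ)) ∈ J := by simpa using hj
    have := Nat.find_min' (hprev_ex j) h
    show Nat.find (hprev_ex j) = 0
    omega
  have hg_le : ∀ j, j ∈ J → g j ≤ n := by
    intro j hj
    have hwit : (j + 1 + ((n - 1 : ℕ) : ℤ)) ∈ J := by
      have h : j + 1 + ((n - 1 : ℕ) : ℤ) = j + n := by push_cast [Nat.cast_sub hn]; ring
      rw [h]; exact hJup j hj
    have h2 := Nat.find_min' (hnext_ex j) hwit
    show 1 + Nat.find (hnext_ex j) ≤ n
    omega
  -- periodicity of d and g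
  have hd_per : ∀ i, d (i + n) = d i := by
    intro i
    rw [hd_def]
    apply find_congr'
    intro k
    constructor
    · intro h
      have h2 := (hJper (i - k)).mpr
      apply h2
      have he : i - (k : ℤ) + n = i + n - k := by ring
      rw [he]; exact h
    · intro h
      have h2 := (hJper (i - k)).mp h
      have he : i - (k : ℤ) + n = i + n - k := by ring
      rwa [he] at h2
  have hg_per : ∀ j, g (j + n) = g j := by
    intro j
    rw [hg_def]
    simp only [add_left_cancel_iff]
    apply find_congr'
    intro k
    constructor
    · intro h
      have h2 := (hJper (j + 1 + k)).mpr
      apply h2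
      have he : j + 1 + (k : ℤ) + n = j + n + 1 + k := by ring
      rw [he]; exact h
    · intro h
      have h2 := (hJper (j + 1 + k)).mp h
      have he : j + 1 + (k : ℤ) + n = j + n + 1 + k := by ring
      rwa [he] at h2
  have hp_per : ∀ i, p (i + n) = p i + n := by
    intro i
    rw [hp_def]
    simp only
    rw [hd_per i]
    ring
  have hq_per : ∀ j, q (j + n) = q j + n := by
    intro j
    rw [hq_def]
    simp only
    rw [hg_per j]
    ring
  -- face data
  set A : ℤ → Fin n → ℤ := fun j t => w j t - omegaVec n j t with hA_def
  set B : ℤ → Fin n → ℤ := fun j t => w (q j) t - omegaVec n (q j) t with hB_def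
  set Sf : ℤ → Finset (Fin n) := fun j => univ.filter (fun t => w j t < w (q j) t) with hSf_def
  set SS : ℤ → ℕ → Finset (Fin n) := fun j => chainF n μ (A j) (B j) (Sf j)
    ((Finset.range (g j)).image (tau hn0 j)) (g j) (tau hn0 j) with hSS_def
  set v : ℤ → Fin n → ℤ := fun i t => w (p i) t
    + (if t ∈ SS (p i) (d i) then 1 else 0) with hv_def
  -- 0/1 increments of w across a gap
  have hw01 : ∀ j, j ∈ J → ∀ t, w (q j) t = w j t + (if t ∈ Sf j then 1 else 0) := by
    intro j hj t
    have hmono : w j t ≤ w (q j) t := hw2 j hj (q j) (hq_mem j) (le_of_lt (hq_gt j)) t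
    have hup : w (q j) t ≤ w j t + 1 := by
      have h1 : w (q j) t ≤ w (j + n) t := by
        apply hw2 (q j) (hq_mem j) (j + n) (hJup j hj)
        have := hg_le j hj
        rw [hq_def]
        push_cast
        omega
      rw [hw1 j hj t] at h1
      exact h1
    rw [hSf_def]
    simp only [Finset.mem_filter, Finset.mem_univ, true_and]
    by_cases hlt : w j t < w (q j) t
    · rw [if_pos hlt]; omega
    · rw [if_neg hlt]; omega
  -- the chainF hypotheses hold for every j ∈ J
  have hτinj : ∀ j, j ∈ J → ∀ k l, k < g j → l < g j → tau hn0 j k = tau hn0 j l → k = l := by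
    intro j hj k l hk hl h
    have := hg_le j hj
    exact tau_inj hn0 j (by omega) (by omega) h
  have hScard : ∀ j, j ∈ J → (Sf j).card = g j := by
    intro j hj
    have hsum := hw3 j hj (q j) (hq_mem j)
    have hqj : q j - j = (g j : ℤ) := by rw [hq_def]; ring
    rw [hqj] at hsum
    have hsplit : ∑ t, w (q j) t = ∑ t, w j t + ∑ t, (if t ∈ Sf j then (1:ℤ) else 0) := by
      rw [← Finset.sum_add_distrib]
      exact Finset.sum_congr rfl (fun t _ => hw01 j hj t)
    have hcard : ∑ t, (if t ∈ Sf j then (1:ℤ) else 0) = ((Sf j).card : ℤ) := by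
      rw [Finset.sum_ite_mem]
      simp
    rw [hsplit, hcard] at hsum
    omega
  have hbeq : ∀ j, j ∈ J → ∀ t, B j t = A j t + (if t ∈ Sf j then 1 else 0)
      - (if t ∈ (Finset.range (g j)).image (tau hn0 j) then 1 else 0) := by
    intro j hj t
    have hω : omegaVec n (q j) t = omegaVec n j t
        + (if t ∈ (Finset.range (g j)).image (tau hn0 j) then 1 else 0) := by
      have he : q j = j + (g j : ℤ) := by rw [hq_def]
      rw [he]
      exact omegaVec_image hn0 j (g j) (hg_le j hj) t
    rw [hB_def, hA_def]
    simp only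
    rw [hw01 j hj t, hω]
    ring
  have hspec : ∀ j, j ∈ J →
      (SS j 0 = ∅ ∧
      (∀ k, k < g j → SS j k ⊆ SS j (k + 1)) ∧
      (∀ k, k ≤ g j → (SS j k).card = k ∧ SS j k ⊆ Sf j ∧
        maj μ (fun t => A j t + (if t ∈ SS j k then 1 else 0)
          - (if t ∈ (Finset.range k).image (tau hn0 j) then 1 else 0)))) := by
    intro j hj
    rw [hSS_def]
    exact chainF_spec hμ (hτinj j hj) rfl (hScard j hj) (hbeq j hj)
      (maj_of_inPmu μ hμ (hwPerm j hj)) (maj_of_inPmu μ hμ (hwPerm (q j) (hq_mem j)))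
    -- location of i between consecutive points of J
  have hq_gt_i : ∀ i, i < q (p i) := by
    intro i
    by_contra hcon
    push_neg at hcon
    have h1 := hq_gt (p i)
    have hplt : p i = i - (d i : ℤ) := rfl
    have hk : ((i - q (p i)).toNat : ℤ) = i - q (p i) := Int.toNat_of_nonneg (by omega)
    have hklt : (i - q (p i)).toNat < d i := by omega
    apply hd_min i _ hklt
    have he : i - (((i - q (p i)).toNat : ℕ) : ℤ) = q (p i) := by omega
    rw [he]
    exact hq_mem (p i)
  have hd_lt_g : ∀ i, d i < g (p i) := by
    intro i
    have h1 := hq_gt_i i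
    have h2 : q (p i) = p i + (g (p i) : ℤ) := rfl
    have hplt : p i = i - (d i : ℤ) := rfl
    omega
  -- periodicity of the choice data
  have hSS_per : ∀ j, j ∈ J → SS (j + n) = SS j := by
    intro j hj
    have hA_eq : A (j + n) = A j := by
      funext t
      show w (j + n) t - omegaVec n (j + n) t = w j t - omegaVec n j t
      rw [hw1 j hj t, omegaVec_add_n hn0]
      ring
    have hq_eq : q (j + n) = q j + n := hq_per j
    have hB_eq : B (j + n) = B j := by
      funext t
      show w (q (j + n)) t - omegaVec n (q (j + n)) t = w (q j) t - omegaVec n (q j) t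
      rw [hq_eq, hw1 (q j) (hq_mem j) t, omegaVec_add_n hn0]
      ring
    have hS_eq : Sf (j + n) = Sf j := by
      show Finset.univ.filter (fun t => w (j + n) t < w (q (j + n)) t)
          = Finset.univ.filter (fun t => w j t < w (q j) t)
      apply Finset.filter_congr
      intro t _
      rw [hq_eq, hw1 j hj t, hw1 (q j) (hq_mem j) t]
      constructor <;> intro h <;> omega
    have hg_eq : g (j + n) = g j := hg_per j
    have hτ_eq : tau hn0 (j + n) = tau hn0 j := tau_shift hn0 j
    show chainF n μ (A (j + n)) (B (j + n)) (Sf (j + n))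
        ((Finset.range (g (j + n))).image (tau hn0 (j + n))) (g (j + n)) (tau hn0 (j + n))
      = chainF n μ (A j) (B j) (Sf j)
        ((Finset.range (g j)).image (tau hn0 j)) (g j) (tau hn0 j)
    rw [hA_eq, hB_eq, hS_eq, hg_eq, hτ_eq]
  -- sums of v
  have hv_sum : ∀ i, ∑ t, v i t = ∑ t, w (p i) t + (d i : ℤ) := by
    intro i
    show ∑ t, (w (p i) t + (if t ∈ SS (p i) (d i) then (1 : ℤ) else 0)) = _
    rw [Finset.sum_add_distrib]
    congr 1
    rw [Finset.sum_ite_mem]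
    simp only [Finset.univ_inter, Finset.sum_const, nsmul_eq_mul, mul_one]
    exact_mod_cast (((hspec (p i) (hp_mem i)).2.2 (d i) (le_of_lt (hd_lt_g i))).1)
  -- v extends w
  have hv_J : ∀ j, j ∈ J → v j = w j := by
    intro j hj
    funext t
    show w (p j) t + (if t ∈ SS (p j) (d j) then (1 : ℤ) else 0) = w j t
    have hpj : p j = j := by
      show j - (d j : ℤ) = j
      rw [hd_J j hj]
      simp
    rw [hpj, hd_J j hj, (hspec j hj).1]
    simp
  -- permissibility
  have hv_perm : ∀ i, inPmu n μ (fun t => v i t - omegaVec n i t) := by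
    intro i
    have hmaj := ((hspec (p i) (hp_mem i)).2.2 (d i) (le_of_lt (hd_lt_g i))).2.2
    have heq : (fun t => v i t - omegaVec n i t)
        = (fun t => A (p i) t + (if t ∈ SS (p i) (d i) then 1 else 0)
          - (if t ∈ (Finset.range (d i)).image (tau hn0 (p i)) then 1 else 0)) := by
      funext t
      have hω : omegaVec n i t = omegaVec n (p i) t
          + (if t ∈ (Finset.range (d i)).image (tau hn0 (p i)) then 1 else 0) := by
        have he : i = (i - (d i : ℤ)) + (d i : ℤ) := by ring
        conv_lhs => rw [he]
        exact omegaVec_image hn0 (p i) (d i) (le_of_lt (hd_lt i)) t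
      show w (p i) t + (if t ∈ SS (p i) (d i) then (1 : ℤ) else 0) - omegaVec n i t = _
      rw [hω]
      show _ = w (p i) t - omegaVec n (p i) t
        + (if t ∈ SS (p i) (d i) then (1 : ℤ) else 0)
        - (if t ∈ (Finset.range (d i)).image (tau hn0 (p i)) then 1 else 0)
      ring
    rw [heq]
    exact inPmu_of_maj μ hμ hmaj
  -- one-step monotonicity
  have hv_step : ∀ i t, v i t ≤ v (i + 1) t := by
    intro i t
    by_cases hi1 : (i + 1) ∈ J
    · have hd1 : d (i + 1) = 0 := hd_J _ hi1
      have hp1 : p (i + 1) = i + 1 := by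
        show i + 1 - (d (i + 1) : ℤ) = i + 1
        rw [hd1]; simp
      have hv1 : v (i + 1) t = w (i + 1) t := by
        show w (p (i + 1)) t + (if t ∈ SS (p (i + 1)) (d (i + 1)) then (1 : ℤ) else 0)
          = w (i + 1) t
        rw [hp1, hd1, (hspec (i + 1) hi1).1]
        simp
      have hqi : q (p i) = i + 1 := by
        have h1 := hq_gt_i i
        have h2 : q (p i) ≤ i + 1 := by
          by_contra hcon
          push_neg at hcon
          exact hq_min (p i) (i + 1) (by have := hp_le i; omega) hcon hi1
        omega
      have hsub := ((hspec (p i) (hp_mem i)).2.2 (d i) (le_of_lt (hd_lt_g i))).2.1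
      show w (p i) t + (if t ∈ SS (p i) (d i) then (1 : ℤ) else 0) ≤ v (i + 1) t
      rw [hv1]
      have hw01' := hw01 (p i) (hp_mem i) t
      rw [hqi] at hw01'
      rw [hw01']
      by_cases hmem : t ∈ SS (p i) (d i)
      · rw [if_pos hmem, if_pos (hsub hmem)]
      · rw [if_neg hmem]
        by_cases h2 : t ∈ Sf (p i) <;> simp [h2]
    · have hd1 : d (i + 1) = d i + 1 := by
        have hle : d (i + 1) ≤ d i + 1 := by
          apply Nat.find_min' (hprev_ex (i + 1))
          have he : i + 1 - ((d i + 1 : ℕ) : ℤ) = i - (d i : ℤ) := by push_cast; ring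
          rw [he]
          exact hp_mem i
        have hne : d (i + 1) ≠ 0 := by
          intro h0
          apply hi1
          have hmem := hp_mem (i + 1)
          have he : p (i + 1) = i + 1 := by
            show i + 1 - (d (i + 1) : ℤ) = i + 1
            rw [h0]; simp
          rwa [he] at hmem
        have hge : d i ≤ d (i + 1) - 1 := by
          apply Nat.find_min' (hprev_ex i)
          have he : i - ((d (i + 1) - 1 : ℕ) : ℤ) = (i + 1) - (d (i + 1) : ℤ) := by
            push_cast [Nat.cast_sub (by omega : 1 ≤ d (i + 1))]
            ring
          rw [he]
          exact hp_mem (i + 1)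
        omega
      have hp1 : p (i + 1) = p i := by
        show i + 1 - (d (i + 1) : ℤ) = i - (d i : ℤ)
        rw [hd1]
        push_cast
        ring
      show w (p i) t + (if t ∈ SS (p i) (d i) then (1 : ℤ) else 0)
        ≤ w (p (i + 1)) t + (if t ∈ SS (p (i + 1)) (d (i + 1)) then (1 : ℤ) else 0)
      rw [hp1, hd1]
      have hsub := (hspec (p i) (hp_mem i)).2.1 (d i) (hd_lt_g i)
      by_cases hmem : t ∈ SS (p i) (d i)
      · rw [if_pos hmem, if_pos (hsub hmem)]
      · rw [if_neg hmem]
        by_cases h2 : t ∈ SS (p i) (d i + 1) <;> simp [h2]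
  have hv_mono_nat : ∀ i (k : ℕ) t, v i t ≤ v (i + (k : ℤ)) t := by
    intro i k t
    induction k with
    | zero => simp
    | succ k ih =>
        have he : i + ((k + 1 : ℕ) : ℤ) = (i + (k : ℤ)) + 1 := by push_cast; ring
        rw [he]
        exact le_trans ih (hv_step (i + (k : ℤ)) t)
  have hv_per : ∀ i t, v (i + n) t = v i t + 1 := by
    intro i t
    show w (p (i + n)) t + (if t ∈ SS (p (i + n)) (d (i + n)) then (1 : ℤ) else 0)
      = w (p i) t + (if t ∈ SS (p i) (d i) then (1 : ℤ) else 0) + 1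
    rw [hp_per i, hd_per i, hSS_per (p i) (hp_mem i), hw1 (p i) (hp_mem i) t]
    ring
  refine ⟨v, ⟨?_, ?_, ?_⟩, ?_, ?_⟩
  · intro i _ t
    exact hv_per i t
  · intro i _ j _ hij t
    have hk : ((j - i).toNat : ℤ) = j - i := Int.toNat_of_nonneg (by omega)
    have h2 := hv_mono_nat i (j - i).toNat t
    rwa [show i + (((j - i).toNat : ℕ) : ℤ) = j by omega] at h2
  · intro i _ j _
    rw [hv_sum i, hv_sum j]
    have h3 := hw3 (p i) (hp_mem i) (p j) (hp_mem j)
    have hpi : p i = i - (d i : ℤ) := rfl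
    have hpj : p j = j - (d j : ℤ) := rfl
    omega
  · intro i _
    exact hv_perm i
  · intro j hj
    exact hv_J j hj
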